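/- With G^{ab}{}_{AB} defined as above, G_{ad}{}^{AB} G_{bcAB} = g_{ab} g_{cd} − g_{ac} g_{bd}. -/

import Mathlib

open Matrix Finset

namespace Stmt6Aux

/-- generic contraction: `g · (ginv · f) = f` -/
lemma contract (g ginv : Fin 5 → Fin 5 → ℂ)
    (hgg : ∀ a b : Fin 5, ∑ c : Fin 5, g a c * ginv c b = if a = b then (1:ℂ) else 0)
    (f : Fin 5 → ℂ) (a : Fin 5) :
    ∑ c : Fin 5, g a c * (∑ e : Fin 5, ginv c e * f e) = f a := by
  calc ∑ c : Fin 5, g a c * ∑ e : Fin 5, ginv c e * f e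
      = ∑ c : Fin 5, ∑ e : Fin 5, g a c * ginv c e * f e := by
        refine Finset.sum_congr rfl fun c _ => ?_
        rw [Finset.mul_sum]
        exact Finset.sum_congr rfl fun e _ => by ring
    _ = ∑ e : Fin 5, ∑ c : Fin 5, g a c * ginv c e * f e := Finset.sum_comm
    _ = ∑ e : Fin 5, (∑ c : Fin 5, g a c * ginv c e) * f e := by
        refine Finset.sum_congr rfl fun e _ => ?_
        rw [Finset.sum_mul]
    _ = ∑ e : Fin 5, (if a = e then (1:ℂ) else 0) * f e := by
        refine Finset.sum_congr rfl fun e _ => by rw [hgg]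
    _ = f a := by simp

/-- exchange of double contraction with inner spinor sum -/
lemma double (u v : Fin 5 → ℂ) (P Q : Fin 5 → Fin 4 → ℂ) :
    ∑ c : Fin 5, ∑ d : Fin 5, (u c * v d) * (∑ B : Fin 4, P c B * Q d B)
      = ∑ B : Fin 4, (∑ c : Fin 5, u c * P c B) * (∑ d : Fin 5, v d * Q d B) := by
  calc ∑ c : Fin 5, ∑ d : Fin 5, (u c * v d) * (∑ B : Fin 4, P c B * Q d B)
      = ∑ c : Fin 5, ∑ d : Fin 5, ∑ B : Fin 4, (u c * P c B) * (v d * Q d B) := by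
        refine Finset.sum_congr rfl fun c _ => Finset.sum_congr rfl fun d _ => ?_
        rw [Finset.mul_sum]
        exact Finset.sum_congr rfl fun B _ => by ring
    _ = ∑ c : Fin 5, ∑ B : Fin 4, ∑ d : Fin 5, (u c * P c B) * (v d * Q d B) :=
        Finset.sum_congr rfl fun c _ => Finset.sum_comm
    _ = ∑ B : Fin 4, ∑ c : Fin 5, ∑ d : Fin 5, (u c * P c B) * (v d * Q d B) :=
        Finset.sum_comm
    _ = ∑ B : Fin 4, (∑ c : Fin 5, u c * P c B) * (∑ d : Fin 5, v d * Q d B) := by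
        refine Finset.sum_congr rfl fun B _ => ?_
        rw [Finset.sum_mul]
        exact Finset.sum_congr rfl fun c _ => by rw [Finset.mul_sum]

/-- trace of four gammas -/
lemma trace_four (g : Fin 5 → Fin 5 → ℂ) (Γ : Fin 5 → Matrix (Fin 4) (Fin 4) ℂ)
    (hclM : ∀ e f : Fin 5, Γ e * Γ f + Γ f * Γ e = (-(g e f)) • (1 : Matrix (Fin 4) (Fin 4) ℂ))
    (e f p q : Fin 5) :
    trace (Γ e * (Γ f * (Γ p * Γ q)))
      = g e f * g p q - g e p * g f q + g e q * g f p := by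
  have tr1 : trace (1 : Matrix (Fin 4) (Fin 4) ℂ) = 4 := by
    simp [Matrix.trace_one]
  have htr2 : ∀ e f : Fin 5, trace (Γ e * Γ f) = -2 * g e f := by
    intro e f
    have h := congrArg trace (hclM e f)
    rw [trace_add, trace_smul, Matrix.trace_mul_comm (Γ f) (Γ e), tr1, smul_eq_mul] at h
    linear_combination h / 2
  have R1 : trace (Γ e * (Γ f * (Γ p * Γ q))) + trace (Γ f * (Γ e * (Γ p * Γ q)))
      = 2 * (g e f * g p q) := by
    have h := congrArg (fun M => trace (M * (Γ p * Γ q))) (hclM e f)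
    simp only [add_mul, smul_mul_assoc, one_mul, trace_add, trace_smul, smul_eq_mul,
      mul_assoc] at h
    rw [htr2 p q] at h
    linear_combination h
  have R2 : trace (Γ f * (Γ e * (Γ p * Γ q))) + trace (Γ f * (Γ p * (Γ e * Γ q)))
      = 2 * (g e p * g f q) := by
    have h := congrArg (fun M => trace (Γ f * (M * Γ q))) (hclM e p)
    simp only [add_mul, mul_add, smul_mul_assoc, mul_smul_comm, one_mul, trace_add,
      trace_smul, smul_eq_mul, mul_assoc] at h
    rw [htr2 f q] at h
    linear_combination h
  have R3 : trace (Γ f * (Γ p * (Γ e * Γ q))) + trace (Γ f * (Γ p * (Γ q * Γ e)))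
      = 2 * (g e q * g f p) := by
    have h := congrArg (fun M => trace (Γ f * (Γ p * M))) (hclM e q)
    simp only [mul_add, mul_smul_comm, trace_add, trace_smul, smul_eq_mul, mul_assoc,
      mul_one] at h
    rw [htr2 f p] at h
    linear_combination h
  have R4 : trace (Γ f * (Γ p * (Γ q * Γ e))) = trace (Γ e * (Γ f * (Γ p * Γ q))) := by
    have h := Matrix.trace_mul_comm (Γ f * (Γ p * Γ q)) (Γ e)
    simp only [mul_assoc] at h
    exact h
  linear_combination (R1 - R2 + R3 - R4) / 2

end Stmt6Aux

namespace Stmt6Aux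
open Matrix

lemma main_matrix (g : Fin 5 → Fin 5 → ℂ) (Γ : Fin 5 → Matrix (Fin 4) (Fin 4) ℂ)
    (E Eh : Matrix (Fin 4) (Fin 4) ℂ) (L S : Fin 5 → Fin 5 → Matrix (Fin 4) (Fin 4) ℂ)
    (hgs : ∀ e f : Fin 5, g e f = g f e)
    (hEEh : E * Ehᵀ = 1) (hEt : Eᵀ = -E)
    (hskew : ∀ e, (Γ e * E)ᵀ = -(Γ e * E))
    (hclM : ∀ e f, Γ e * Γ f + Γ f * Γ e = (-(g e f)) • (1 : Matrix (Fin 4) (Fin 4) ℂ))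
    (hL : ∀ x y, L x y = (1/2:ℂ) • (Γ x * (Γ y * E) - Γ y * (Γ x * E)))
    (hS : ∀ x y, S x y = Eh * (L x y * Ehᵀ)) :
    ∀ a b c d, trace (S a d * (L b c)ᵀ) = g a b * g c d - g a c * g b d := by
  intro a b c d
  have hEhE : Ehᵀ * E = 1 := mul_eq_one_comm.mp hEEh
  have hEhskew : Eh = -Ehᵀ := by
    have h1 : Eh * Eᵀ = 1 := by
      have h := congrArg Matrix.transpose hEEh
      simpa [Matrix.transpose_mul] using h
    have h2 : Eh * E = -1 := by
      rw [hEt, mul_neg] at h1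
      exact neg_eq_iff_eq_neg.mp h1
    calc Eh = Eh * (E * Ehᵀ) := by rw [hEEh, mul_one]
      _ = Eh * E * Ehᵀ := by rw [mul_assoc]
      _ = -Ehᵀ := by rw [h2, neg_one_mul]
  have hΓT : ∀ e, (Γ e)ᵀ = Ehᵀ * (Γ e * E) := by
    intro e
    have h : E * (Γ e)ᵀ = Γ e * E := by
      have h0 := hskew e
      rw [Matrix.transpose_mul, hEt, neg_mul] at h0
      exact neg_injective h0
    calc (Γ e)ᵀ = (Ehᵀ * E) * (Γ e)ᵀ := by rw [hEhE, one_mul]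
      _ = Ehᵀ * (E * (Γ e)ᵀ) := by rw [mul_assoc]
      _ = Ehᵀ * (Γ e * E) := by rw [h]
  have hTT : ∀ e f, (Γ e * (Γ f * E))ᵀ = -(Γ f * (Γ e * E)) := by
    intro e f
    rw [Matrix.transpose_mul, hskew f, hΓT e, neg_mul]
    congr 1
    calc Γ f * E * (Ehᵀ * (Γ e * E)) = Γ f * (E * Ehᵀ * (Γ e * E)) := by
          simp only [mul_assoc]
      _ = Γ f * (Γ e * E) := by rw [hEEh, one_mul]
  have hLsymm : (L b c)ᵀ = L b c := by
    rw [hL]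
    simp only [Matrix.transpose_smul, Matrix.transpose_sub, hTT]
    rw [neg_sub_neg]
  have hmid : L a d * Ehᵀ = (1/2:ℂ) • (Γ a * Γ d - Γ d * Γ a) := by
    have cancel : ∀ M N : Matrix (Fin 4) (Fin 4) ℂ, M * (N * E) * Ehᵀ = M * N := by
      intro M N
      rw [mul_assoc, mul_assoc, hEEh, mul_one]
    rw [hL, smul_mul_assoc, sub_mul, cancel, cancel]
  have tlem : ∀ x y u v : Fin 5,
      trace (Ehᵀ * (Γ x * (Γ y * (Γ u * (Γ v * E)))))
        = g x y * g u v - g x u * g y v + g x v * g y u := by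
    intro x y u v
    rw [Matrix.trace_mul_comm]
    have h : Γ x * (Γ y * (Γ u * (Γ v * E))) * Ehᵀ = Γ x * (Γ y * (Γ u * Γ v)) := by
      simp only [mul_assoc]
      rw [hEEh, mul_one]
    rw [h]
    exact trace_four g Γ hclM x y u v
  rw [hLsymm, hS, hmid, hL b c, hEhskew]
  simp only [neg_mul, trace_neg, smul_mul_assoc, mul_smul_comm, trace_smul, mul_sub,
    sub_mul, trace_sub, smul_eq_mul, mul_assoc]
  rw [tlem a d b c, tlem a d c b, tlem d a b c, tlem d a c b]
  rw [hgs c b, hgs d c, hgs d a, hgs d b]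
  ring

end Stmt6Aux


namespace Stmt6Aux
open Matrix

lemma transpose_two (Γx Γy E Eh : Matrix (Fin 4) (Fin 4) ℂ)
    (hEEh : E * Ehᵀ = 1) (hEt : Eᵀ = -E)
    (hskewx : (Γx * E)ᵀ = -(Γx * E)) (hskewy : (Γy * E)ᵀ = -(Γy * E)) :
    (Γx * (Γy * E))ᵀ = -(Γy * (Γx * E)) := by
  have hEhE : Ehᵀ * E = 1 := mul_eq_one_comm.mp hEEh
  have hΓT : (Γx)ᵀ = Ehᵀ * (Γx * E) := by
    have h : E * (Γx)ᵀ = Γx * E := by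
      have h0 := hskewx
      rw [Matrix.transpose_mul, hEt, neg_mul] at h0
      exact neg_injective h0
    calc (Γx)ᵀ = (Ehᵀ * E) * (Γx)ᵀ := by rw [hEhE, one_mul]
      _ = Ehᵀ * (E * (Γx)ᵀ) := by rw [mul_assoc]
      _ = Ehᵀ * (Γx * E) := by rw [h]
  rw [Matrix.transpose_mul, hskewy, hΓT, neg_mul]
  congr 1
  calc Γy * E * (Ehᵀ * (Γx * E)) = Γy * (E * Ehᵀ * (Γx * E)) := by
        simp only [mul_assoc]
    _ = Γy * (Γx * E) := by rw [hEEh, one_mul]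

end Stmt6Aux


/-- `G_{ad}{}^{AB} G_{bcAB} = g_{ab} g_{cd} − g_{ac} g_{bd}`. -/
theorem stmt_6
    (g ginv : Fin 5 → Fin 5 → ℂ)
    (ε εh : Fin 4 → Fin 4 → ℂ)
    (γ γlo γmixU γloU : Fin 5 → Fin 4 → Fin 4 → ℂ)
    (G Glo Gs : Fin 5 → Fin 5 → Fin 4 → Fin 4 → ℂ)
    (hεa : ∀ A B : Fin 4, ε A B = -ε B A)
    (hεinv : ∀ A C : Fin 4,
      ∑ B : Fin 4, ε A B * εh C B = if A = C then (1 : ℂ) else 0)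
    (hgsymm : ∀ a b : Fin 5, g a b = g b a)
    (hginv : ∀ a b : Fin 5,
      ∑ c : Fin 5, ginv a c * g c b = if a = b then (1 : ℂ) else 0)
    (hcl : ∀ (a b : Fin 5) (A C : Fin 4),
      (∑ B : Fin 4, γ a A B * γ b B C) + (∑ B : Fin 4, γ b A B * γ a B C)
        = -(if A = C then (1 : ℂ) else 0) * g a b)
    (htr : ∀ a : Fin 5, ∑ A : Fin 4, γ a A A = 0)
    (hγlo : ∀ (a : Fin 5) (A B : Fin 4),
      γlo a A B = ∑ C : Fin 4, γ a A C * ε C B)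
    (hanti : ∀ (a : Fin 5) (A B : Fin 4), γlo a A B = -γlo a B A)
    (hεtr : ∀ a : Fin 5, ∑ A : Fin 4, ∑ B : Fin 4, εh A B * γlo a A B = 0)
    (hsq : ∀ (C D A B : Fin 4),
      ∑ a : Fin 5, ∑ b : Fin 5, ginv a b * γlo a C D * γlo b A B
        = ε A D * ε B C - ε A C * ε B D + (1/2) * ε A B * ε C D)
    (hγmixU : ∀ (a : Fin 5) (A B : Fin 4),
      γmixU a A B = ∑ b : Fin 5, ginv a b * γ b A B)
    (hγloU : ∀ (a : Fin 5) (A B : Fin 4),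
      γloU a A B = ∑ b : Fin 5, ginv a b * γlo b A B)
    (hG : ∀ (a b : Fin 5) (A C : Fin 4),
      G a b A C = -(1/2 : ℂ) *
        ((∑ B : Fin 4, γmixU a A B * γloU b C B)
          + (∑ B : Fin 4, γmixU a C B * γloU b A B)))
    (hGlo : ∀ (a b : Fin 5) (A C : Fin 4),
      Glo a b A C = ∑ c : Fin 5, ∑ d : Fin 5, g a c * g b d * G c d A C)
    (hGs : ∀ (a b : Fin 5) (A B : Fin 4),
      Gs a b A B = ∑ C : Fin 4, ∑ D : Fin 4, εh A C * εh B D * Glo a b C D) :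
    ∀ (a b c d : Fin 5),
      ∑ A : Fin 4, ∑ B : Fin 4, Gs a d A B * Glo b c A B
        = g a b * g c d - g a c * g b d := by

  intro a b c d
  have hEEh : Matrix.of ε * (Matrix.of εh)ᵀ = 1 := by
    ext A C
    simp only [Matrix.mul_apply, Matrix.transpose_apply, Matrix.of_apply, Matrix.one_apply]
    exact hεinv A C
  have hEt : (Matrix.of ε)ᵀ = -(Matrix.of ε) := by
    ext A B
    simp only [Matrix.transpose_apply, Matrix.neg_apply, Matrix.of_apply]
    exact hεa B A
  have hΓloM : ∀ e : Fin 5, Matrix.of (γlo e) = Matrix.of (γ e) * Matrix.of ε := by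
    intro e; ext A B
    simp only [Matrix.of_apply, Matrix.mul_apply]
    exact hγlo e A B
  have hskew : ∀ e : Fin 5,
      (Matrix.of (γ e) * Matrix.of ε)ᵀ = -(Matrix.of (γ e) * Matrix.of ε) := by
    intro e
    rw [← hΓloM e]
    ext A B
    simp only [Matrix.transpose_apply, Matrix.neg_apply, Matrix.of_apply]
    exact hanti e B A
  have hclM : ∀ e f : Fin 5, Matrix.of (γ e) * Matrix.of (γ f) + Matrix.of (γ f) * Matrix.of (γ e)
      = (-(g e f)) • (1 : Matrix (Fin 4) (Fin 4) ℂ) := by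
    intro e f
    ext A C
    simp only [Matrix.add_apply, Matrix.mul_apply, Matrix.smul_apply, Matrix.one_apply,
      Matrix.of_apply, smul_eq_mul]
    rw [hcl e f A C]
    ring
  have hgg : ∀ x y : Fin 5, ∑ c : Fin 5, g x c * ginv c y = if x = y then (1:ℂ) else 0 := by
    have hmat : Matrix.of ginv * Matrix.of g = 1 := by
      ext x y
      simp only [Matrix.mul_apply, Matrix.of_apply, Matrix.one_apply]
      exact hginv x y
    have hmat2 : Matrix.of g * Matrix.of ginv = 1 := mul_eq_one_comm.mp hmat
    intro x y
    have h := Matrix.ext_iff.mpr hmat2 x y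
    simpa only [Matrix.mul_apply, Matrix.of_apply, Matrix.one_apply] using h
  have key1 : ∀ (e : Fin 5) (A B : Fin 4), ∑ c : Fin 5, g e c * γmixU c A B = γ e A B := by
    intro e A B
    calc ∑ c : Fin 5, g e c * γmixU c A B
        = ∑ c : Fin 5, g e c * (∑ f : Fin 5, ginv c f * γ f A B) :=
          Finset.sum_congr rfl fun cc _ => by rw [hγmixU]
      _ = γ e A B := Stmt6Aux.contract g ginv hgg (fun f => γ f A B) e
  have key2 : ∀ (e : Fin 5) (A B : Fin 4), ∑ c : Fin 5, g e c * γloU c A B = γlo e A B := by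
    intro e A B
    calc ∑ c : Fin 5, g e c * γloU c A B
        = ∑ c : Fin 5, g e c * (∑ f : Fin 5, ginv c f * γlo f A B) :=
          Finset.sum_congr rfl fun cc _ => by rw [hγloU]
      _ = γlo e A B := Stmt6Aux.contract g ginv hgg (fun f => γlo f A B) e
  have hGlo1 : ∀ (x y : Fin 5) (A C : Fin 4),
      Glo x y A C = -(1/2 : ℂ) *
        ((∑ B : Fin 4, γ x A B * γlo y C B) + (∑ B : Fin 4, γ x C B * γlo y A B)) := by
    intro x y A C
    rw [hGlo]
    calc (∑ cc : Fin 5, ∑ dd : Fin 5, g x cc * g y dd * G cc dd A C)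
        = ∑ cc : Fin 5, ∑ dd : Fin 5,
            (-(1/2:ℂ) * ((g x cc * g y dd) * (∑ B : Fin 4, γmixU cc A B * γloU dd C B))
            + -(1/2:ℂ) * ((g x cc * g y dd) * (∑ B : Fin 4, γmixU cc C B * γloU dd A B))) := by
          refine Finset.sum_congr rfl fun cc _ => Finset.sum_congr rfl fun dd _ => ?_
          rw [hG]
          ring
      _ = -(1/2:ℂ) * (∑ cc : Fin 5, ∑ dd : Fin 5,
              (g x cc * g y dd) * (∑ B : Fin 4, γmixU cc A B * γloU dd C B))
          + -(1/2:ℂ) * (∑ cc : Fin 5, ∑ dd : Fin 5,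
              (g x cc * g y dd) * (∑ B : Fin 4, γmixU cc C B * γloU dd A B)) := by
          simp only [Finset.sum_add_distrib, ← Finset.mul_sum]
      _ = -(1/2:ℂ) * (∑ B : Fin 4, (∑ cc : Fin 5, g x cc * γmixU cc A B)
              * (∑ dd : Fin 5, g y dd * γloU dd C B))
          + -(1/2:ℂ) * (∑ B : Fin 4, (∑ cc : Fin 5, g x cc * γmixU cc C B)
              * (∑ dd : Fin 5, g y dd * γloU dd A B)) := by
          rw [Stmt6Aux.double, Stmt6Aux.double]
      _ = -(1/2:ℂ) * ((∑ B : Fin 4, γ x A B * γlo y C B)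
            + (∑ B : Fin 4, γ x C B * γlo y A B)) := by
          simp only [key1, key2]
          ring
  have hABC : ∀ (u w : Fin 5) (A C : Fin 4),
      (Matrix.of (γ u) * (Matrix.of (γ w) * Matrix.of ε)) A C
        = ∑ B : Fin 4, γ u A B * γlo w B C := by
    intro u w A C
    rw [← hΓloM w]
    simp only [Matrix.mul_apply, Matrix.of_apply]
  have hLoM : ∀ x y : Fin 5, Matrix.of (Glo x y)
      = (1/2:ℂ) • (Matrix.of (γ x) * (Matrix.of (γ y) * Matrix.of ε)
          - Matrix.of (γ y) * (Matrix.of (γ x) * Matrix.of ε)) := by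
    intro x y
    have e1 : ∀ A C : Fin 4, (∑ B : Fin 4, γ x A B * γlo y C B)
        = -((Matrix.of (γ x) * (Matrix.of (γ y) * Matrix.of ε)) A C) := by
      intro A C
      rw [hABC x y A C, ← Finset.sum_neg_distrib]
      refine Finset.sum_congr rfl fun B _ => ?_
      rw [hanti y C B]; ring
    ext A C
    rw [Matrix.of_apply, hGlo1 x y A C, e1 A C]
    have e2 : (∑ B : Fin 4, γ x C B * γlo y A B)
        = (Matrix.of (γ y) * (Matrix.of (γ x) * Matrix.of ε)) A C := by
      rw [e1 C A]
      have h := Stmt6Aux.transpose_two (Matrix.of (γ x)) (Matrix.of (γ y))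
        (Matrix.of ε) (Matrix.of εh) hEEh hEt (hskew x) (hskew y)
      have h2 := Matrix.ext_iff.mpr h A C
      rw [Matrix.transpose_apply] at h2
      rw [h2, Matrix.neg_apply, neg_neg]
    rw [e2]
    simp only [Matrix.smul_apply, Matrix.sub_apply, smul_eq_mul]
    ring
  have hSof : ∀ x y : Fin 5, Matrix.of (Gs x y)
      = Matrix.of εh * (Matrix.of (Glo x y) * (Matrix.of εh)ᵀ) := by
    intro x y
    ext A B
    simp only [Matrix.of_apply, Matrix.mul_apply, Matrix.transpose_apply, Finset.mul_sum]
    rw [hGs]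
    exact Finset.sum_congr rfl fun C _ => Finset.sum_congr rfl fun D _ => by ring
  have hbridge : ∑ A : Fin 4, ∑ B : Fin 4, Gs a d A B * Glo b c A B
      = Matrix.trace (Matrix.of (Gs a d) * (Matrix.of (Glo b c))ᵀ) := by
    simp [Matrix.trace, Matrix.diag, Matrix.mul_apply, Matrix.transpose_apply,
      Matrix.of_apply]
  rw [hbridge]
  exact Stmt6Aux.main_matrix g (fun e => Matrix.of (γ e)) (Matrix.of ε) (Matrix.of εh)
    (fun x y => Matrix.of (Glo x y)) (fun x y => Matrix.of (Gs x y))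
    hgsymm hEEh hEt hskew hclM hLoM hSof a b c d
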